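/- Let 0 < a < 1/2, c = √2(a-1/2), and let (u(z), w(z)) be the Nagumo front (u' = w, w' = -c w - f(u), u(-∞)=0, u(+∞)=1). Suppose α(z) solves the scalar ODE α' = -c α - w(z)², with w → 0 faster than e^{-cz} as z → -∞ and α bounded by appropriate growth. Then α(z) = -e^{-cz} ∫_{-∞}^z e^{cs} w(s)² ds, and lim_{z→∞} e^{cz} α(z) = -∫_{-∞}^∞ e^{cs} w(s)² ds < 0. -/

import Mathlib

open Real MeasureTheory Filter Topology

lemma integrableOn_exp_mul_Iic' {b : ℝ} (hb : 0 < b) (a : ℝ) :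
    IntegrableOn (fun x => Real.exp (b * x)) (Set.Iic a) := by
  apply integrableOn_Iic_of_intervalIntegral_norm_bounded (Real.exp (b * a) / b) a
    (a := fun i : ℝ => i) (l := atBot)
  · intro i
    exact ((Real.continuous_exp.comp (continuous_const.mul continuous_id)).intervalIntegrable i a).1
  · exact tendsto_id
  · filter_upwards with i
    have hF : ∀ x ∈ Set.uIcc i a,
        HasDerivAt (fun x => Real.exp (b * x) / b) (Real.exp (b * x)) x := by
      intro x _
      have h1 : HasDerivAt (fun x : ℝ => b * x) b x := by
        simpa using (hasDerivAt_id x).const_mul b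
      have h2 := (h1.exp).div_const b
      simpa [mul_comm, mul_div_assoc, mul_div_cancel_left₀ _ hb.ne'] using h2
    have hint : IntervalIntegrable (fun x => Real.exp (b * x)) volume i a :=
      (Real.continuous_exp.comp (continuous_const.mul continuous_id)).intervalIntegrable i a
    have heq := intervalIntegral.integral_eq_sub_of_hasDerivAt hF hint
    have hnorm : (∫ x in i..a, ‖Real.exp (b * x)‖) = ∫ x in i..a, Real.exp (b * x) := by
      congr 1; ext x; exact Real.norm_of_nonneg (Real.exp_pos _).le
    rw [hnorm, heq]
    have : 0 < Real.exp (b * i) / b := by positivity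
    linarith

lemma exp_mul_exp_sq (x y : ℝ) :
    Real.exp x * (Real.exp y) ^ 2 = Real.exp (x + 2 * y) := by
  rw [sq, ← Real.exp_add, ← Real.exp_add]; ring_nf

/-- Melnikov computation along the fast front: the solution `α` of
`α' = -cα - w²` which does not grow like `e^{-cz}` at `-∞` is
`α(z) = -e^{-cz} ∫_{-∞}^z e^{cs} w(s)² ds`, and `e^{cz} α(z)` tends to
`-∫_{-∞}^∞ e^{cs} w(s)² ds < 0` as `z → ∞`. -/
theorem stmt_4 (a : ℝ) (ha : 0 < a) (ha' : a < 1/2)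
    (c : ℝ) (hc : c = Real.sqrt 2 * (a - 1/2))
    (u : ℝ → ℝ) (hu : ∀ z, u z = 1 / (1 + Real.exp (-(Real.sqrt 2 / 2) * z)))
    (w : ℝ → ℝ) (hw : ∀ z, w z = deriv u z)
    (α : ℝ → ℝ) (hα : Differentiable ℝ α)
    (hode : ∀ z, deriv α z = -c * α z - (w z) ^ 2)
    (hdecay : Tendsto (fun z => Real.exp (c * z) * α z) atBot (𝓝 0)) :
    (∀ z, α z = -Real.exp (-c * z) * ∫ s in Set.Iic z, Real.exp (c * s) * (w s) ^ 2) ∧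
    Tendsto (fun z => Real.exp (c * z) * α z) atTop
      (𝓝 (-∫ s : ℝ, Real.exp (c * s) * (w s) ^ 2)) ∧
    -∫ s : ℝ, Real.exp (c * s) * (w s) ^ 2 < 0 := by
  have hs2 : (0:ℝ) < Real.sqrt 2 := Real.sqrt_pos.mpr (by norm_num)
  set k : ℝ := Real.sqrt 2 / 2 with hkdef
  have hk : 0 < k := by positivity
  have hc0 : c < 0 := by
    rw [hc]; exact mul_neg_of_pos_of_neg hs2 (by linarith)
  have hck : 0 < c + 2 * k := by
    have : c + 2 * k = Real.sqrt 2 * (a + 1/2) := by rw [hc, hkdef]; ring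
    rw [this]; positivity
  -- the derivative of the front
  have hden : ∀ z : ℝ, 0 < 1 + Real.exp (-k * z) := fun z => by positivity
  have hder_u : ∀ z, HasDerivAt u
      (k * Real.exp (-k * z) / (1 + Real.exp (-k * z)) ^ 2) z := by
    intro z
    have hu' : u = fun z => (1 + Real.exp (-k * z))⁻¹ := by
      funext z; rw [hu, one_div]
    rw [hu']
    have h1 : HasDerivAt (fun z : ℝ => -k * z) (-k) z := by
      simpa using (hasDerivAt_id z).const_mul (-k)
    have h3 : HasDerivAt (fun z : ℝ => 1 + Real.exp (-k * z))
        (Real.exp (-k * z) * (-k)) z := (h1.exp).const_add 1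
    have h4 : HasDerivAt (fun z : ℝ => (1 + Real.exp (-k * z))⁻¹) _ z := h3.inv (ne_of_gt (hden z))
    convert h4 using 1
    simp only [mul_neg, neg_neg]
    ring
  have hwf : ∀ z, w z = k * Real.exp (-k * z) / (1 + Real.exp (-k * z)) ^ 2 := by
    intro z; rw [hw, (hder_u z).deriv]
  have hwpos : ∀ z, 0 < w z := by
    intro z; rw [hwf]; positivity
  have hwle1 : ∀ z, w z ≤ k * Real.exp (-k * z) := by
    intro z; rw [hwf]
    apply div_le_self (by positivity)
    nlinarith [Real.exp_pos (-k * z)]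
  have hwle2 : ∀ z, w z ≤ k * Real.exp (k * z) := by
    intro z; rw [hwf]
    rw [div_le_iff₀ (by positivity)]
    have hE : Real.exp (k * z) * Real.exp (-k * z) = 1 := by
      rw [← Real.exp_add]; ring_nf; exact Real.exp_zero
    have h2 : Real.exp (k * z) * (1 + Real.exp (-k * z)) ^ 2
        = Real.exp (k * z) + 2 + Real.exp (-k * z) := by
      linear_combination (2 + Real.exp (-k * z)) * hE
    rw [mul_assoc, h2]
    nlinarith [Real.exp_pos (k * z)]
  set g : ℝ → ℝ := fun s => Real.exp (c * s) * (w s) ^ 2 with hgdef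
  have hgcont : Continuous g := by
    have hwcont : Continuous w := by
      have : w = fun z => k * Real.exp (-k * z) / (1 + Real.exp (-k * z)) ^ 2 := funext hwf
      rw [this]
      exact (continuous_const.mul (Real.continuous_exp.comp
        (continuous_const.mul continuous_id))).div
        ((continuous_const.add (Real.continuous_exp.comp
          (continuous_const.mul continuous_id))).pow 2) (fun z => by positivity)
    exact (Real.continuous_exp.comp (continuous_const.mul continuous_id)).mul (hwcont.pow 2)
  have hgnn : ∀ s, 0 ≤ g s := fun s => mul_nonneg (Real.exp_pos _).le (sq_nonneg _)
  have hgpos : ∀ s, 0 < g s := fun s => mul_pos (Real.exp_pos _) (pow_pos (hwpos s) 2)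
  -- bounds on g
  have hg2 : ∀ s, g s ≤ k ^ 2 * Real.exp ((c + 2 * k) * s) := by
    intro s
    have h1 : (w s) ^ 2 ≤ (k * Real.exp (k * s)) ^ 2 :=
      pow_le_pow_left₀ (hwpos s).le (hwle2 s) 2
    calc g s ≤ Real.exp (c * s) * (k * Real.exp (k * s)) ^ 2 := by
          exact mul_le_mul_of_nonneg_left h1 (Real.exp_pos _).le
      _ = k ^ 2 * Real.exp ((c + 2 * k) * s) := by
          rw [mul_pow, ← mul_assoc, mul_comm (Real.exp (c * s)) (k ^ 2), mul_assoc,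
            exp_mul_exp_sq]; ring_nf
  have hg1 : ∀ s, g s ≤ k ^ 2 * Real.exp (-(2 * k - c) * s) := by
    intro s
    have h1 : (w s) ^ 2 ≤ (k * Real.exp (-k * s)) ^ 2 :=
      pow_le_pow_left₀ (hwpos s).le (hwle1 s) 2
    calc g s ≤ Real.exp (c * s) * (k * Real.exp (-k * s)) ^ 2 := by
          exact mul_le_mul_of_nonneg_left h1 (Real.exp_pos _).le
      _ = k ^ 2 * Real.exp (-(2 * k - c) * s) := by
          rw [mul_pow, ← mul_assoc, mul_comm (Real.exp (c * s)) (k ^ 2), mul_assoc,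
            exp_mul_exp_sq]; ring_nf
  -- integrability of g
  have hInt : Integrable g := by
    have hm : AEStronglyMeasurable g volume := hgcont.aestronglyMeasurable
    have i1 : IntegrableOn g (Set.Iic 0) := by
      apply Integrable.mono' (((integrableOn_exp_mul_Iic' hck 0).const_mul (k ^ 2))) hm.restrict
      filter_upwards with s
      rw [Real.norm_of_nonneg (hgnn s)]
      exact hg2 s
    have i2 : IntegrableOn g (Set.Ioi 0) := by
      have hb2 : 0 < 2 * k - c := by linarith
      apply Integrable.mono' ((exp_neg_integrableOn_Ioi 0 hb2).const_mul (k ^ 2)) hm.restrict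
      filter_upwards with s
      rw [Real.norm_of_nonneg (hgnn s)]
      exact hg1 s
    have := i1.union i2
    rwa [Set.Iic_union_Ioi, integrableOn_univ] at this
  -- derivative of β z = exp (c z) * α z
  have hβ : ∀ z, HasDerivAt (fun z => Real.exp (c * z) * α z) (-g z) z := by
    intro z
    have h1 : HasDerivAt (fun z : ℝ => Real.exp (c * z)) (Real.exp (c * z) * c) z := by
      have : HasDerivAt (fun z : ℝ => c * z) c z := by
        simpa using (hasDerivAt_id z).const_mul c
      exact this.exp
    have h2 : HasDerivAt α (deriv α z) z := (hα z).hasDerivAt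
    have h3 : HasDerivAt (fun z => Real.exp (c * z) * α z) _ z := h1.mul h2
    rw [hode z] at h3
    convert h3 using 1
    show -(Real.exp (c * z) * (w z) ^ 2) = _; ring
  -- the key identity
  have key : ∀ z, Real.exp (c * z) * α z = -∫ s in Set.Iic z, g s := by
    intro z
    have h := integral_Iic_of_hasDerivAt_of_tendsto' (a := z)
      (f := fun z => Real.exp (c * z) * α z) (f' := fun z => -g z)
      (fun x _ => hβ x) (hInt.neg.integrableOn) hdecay
    rw [integral_neg] at h
    simp only [sub_zero] at h
    linarith [h]
  refine ⟨?_, ?_, ?_⟩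
  · intro z
    have h := key z
    have he : Real.exp (-c * z) * Real.exp (c * z) = 1 := by
      rw [← Real.exp_add]; ring_nf; exact Real.exp_zero
    calc α z = (Real.exp (-c * z) * Real.exp (c * z)) * α z := by rw [he, one_mul]
      _ = Real.exp (-c * z) * (Real.exp (c * z) * α z) := by ring
      _ = Real.exp (-c * z) * (-∫ s in Set.Iic z, g s) := by rw [h]
      _ = -Real.exp (-c * z) * ∫ s in Set.Iic z, g s := by ring
  · have hmono : Monotone (fun z : ℝ => Set.Iic z) := fun x y h => Set.Iic_subset_Iic.mpr h
    have hunion : (⋃ z : ℝ, Set.Iic z) = Set.univ := Set.iUnion_Iic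
    have ht := tendsto_setIntegral_of_monotone (s := fun z : ℝ => Set.Iic z)
      (fun z => measurableSet_Iic) hmono (by rw [hunion]; exact hInt.integrableOn)
    rw [hunion, setIntegral_univ] at ht
    have := ht.neg
    apply this.congr
    intro z
    exact (key z).symm
  · have hpos : 0 < ∫ s, g s := by
      rw [integral_pos_iff_support_of_nonneg hgnn hInt]
      have hsupp : Function.support g = Set.univ := by
        ext s; simp [Function.support, (hgpos s).ne']
      rw [hsupp]
      simp
    linarith
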